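/- Fix t ≤ b, block length 2^{b−1}, and define I_b^t by flagging, within each block, the positions of the first 2^t and last 2^t distinct values of the block (i.e., the leftmost occurrences of the first 2^t distinct elements reading left-to-right, and symmetrically right-to-left). Then for any range [i..j] with j−i+1 > 2^{b−1} and ⌈1/τ⌉ ≤ 2^t: the positions flagged in I_b^t[i..j] contain a τ-minority of S[i..j], if one exists. -/
import Mathlib


/-- Number of occurrences of `a` in `S[i..j]`. -/
def occCount {A : Type*} [DecidableEq A] (S : ℕ → A) (a : A) (i j : ℕ) : ℕ :=
  ((Finset.Icc i j).filter (fun k => S k = a)).card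

/-- The flag `I_b^t[k] = 1`: within its block of length `2^(b-1)` (clipped to `[1..n]`),
position `k` is the leftmost occurrence of one of the first `2^t` distinct values of the
block (reading left-to-right), or the rightmost occurrence of one of the last `2^t`
distinct values of the block (reading right-to-left). -/
def Iflag {A : Type*} [DecidableEq A] (n : ℕ) (S : ℕ → A) (b t : ℕ) (k : ℕ) : Prop :=
  let lo := ((k - 1) / 2 ^ (b - 1)) * 2 ^ (b - 1) + 1
  let hi := min (lo + 2 ^ (b - 1) - 1) n
  ((∀ k' ∈ Finset.Icc lo (k - 1), S k' ≠ S k) ∧ ((Finset.Icc lo k).image S).card ≤ 2 ^ t) ∨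
  ((∀ k' ∈ Finset.Icc (k + 1) hi, S k' ≠ S k) ∧ ((Finset.Icc k hi).image S).card ≤ 2 ^ t)

section AuxiliaryLemmas
open Finset

lemma rank_filter_card_ge (T : Finset ℕ) (d : ℕ) :
    (T.filter (fun k => (T.filter (fun k' => k ≤ k')).card ≤ d)).card = min d T.card := by
  set rk : ℕ → ℕ := fun k => (T.filter (fun k' => k ≤ k')).card with hrk
  have hanti : ∀ k1 ∈ T, ∀ k2 ∈ T, k1 < k2 → rk k2 < rk k1 := by
    intro k1 h1 k2 h2 hlt
    apply Finset.card_lt_card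
    constructor
    · intro x hx
      simp only [mem_filter] at hx ⊢
      exact ⟨hx.1, le_trans hlt.le hx.2⟩
    · intro hsub
      have := hsub (by simp [h1] : k1 ∈ T.filter (fun k' => k1 ≤ k'))
      simp only [mem_filter] at this
      omega
  have hinj : Set.InjOn rk T := by
    intro k1 h1 k2 h2 heq
    by_contra hne
    rcases lt_or_gt_of_ne hne with h | h
    · exact absurd heq (by have := hanti _ h1 _ h2 h; omega)
    · exact absurd heq (by have := hanti _ h2 _ h1 h; omega)
  have hmem : ∀ k ∈ T, rk k ∈ Icc 1 T.card := by
    intro k hk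
    simp only [mem_Icc]
    constructor
    · have : k ∈ T.filter (fun k' => k ≤ k') := by simp [hk]
      exact Finset.card_pos.mpr ⟨k, this⟩
    · exact Finset.card_le_card (filter_subset _ _)
  have himg : T.image rk = Icc 1 T.card := by
    apply Finset.eq_of_subset_of_card_le
    · intro x hx; simp only [mem_image] at hx; obtain ⟨k, hk, rfl⟩ := hx; exact hmem k hk
    · rw [Finset.card_image_of_injOn hinj, Nat.card_Icc]; omega
  have h1 : (T.filter (fun k => rk k ≤ d)).image rk = (T.image rk).filter (fun r => r ≤ d) := by
    rw [Finset.filter_image]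
  have h2 : (T.filter (fun k => rk k ≤ d)).card = ((T.image rk).filter (fun r => r ≤ d)).card := by
    rw [← h1, Finset.card_image_of_injOn (hinj.mono (by intro x hx; exact (mem_filter.mp hx).1))]
  rw [h2, himg]
  have : (Icc 1 T.card).filter (fun r => r ≤ d) = Icc 1 (min d T.card) := by
    ext x; simp only [mem_filter, mem_Icc]; omega
  rw [this, Nat.card_Icc]; omega

lemma rank_filter_card_le (T : Finset ℕ) (d : ℕ) :
    (T.filter (fun k => (T.filter (fun k' => k' ≤ k)).card ≤ d)).card = min d T.card := by
  set rk : ℕ → ℕ := fun k => (T.filter (fun k' => k' ≤ k)).card with hrk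
  have hanti : ∀ k1 ∈ T, ∀ k2 ∈ T, k1 < k2 → rk k1 < rk k2 := by
    intro k1 h1 k2 h2 hlt
    apply Finset.card_lt_card
    constructor
    · intro x hx
      simp only [mem_filter] at hx ⊢
      exact ⟨hx.1, le_trans hx.2 hlt.le⟩
    · intro hsub
      have := hsub (by simp [h2] : k2 ∈ T.filter (fun k' => k' ≤ k2))
      simp only [mem_filter] at this
      omega
  have hinj : Set.InjOn rk T := by
    intro k1 h1 k2 h2 heq
    by_contra hne
    rcases lt_or_gt_of_ne hne with h | h
    · exact absurd heq (by have := hanti _ h1 _ h2 h; omega)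
    · exact absurd heq (by have := hanti _ h2 _ h1 h; omega)
  have hmem : ∀ k ∈ T, rk k ∈ Icc 1 T.card := by
    intro k hk
    simp only [mem_Icc]
    constructor
    · have : k ∈ T.filter (fun k' => k' ≤ k) := by simp [hk]
      exact Finset.card_pos.mpr ⟨k, this⟩
    · exact Finset.card_le_card (filter_subset _ _)
  have himg : T.image rk = Icc 1 T.card := by
    apply Finset.eq_of_subset_of_card_le
    · intro x hx; simp only [mem_image] at hx; obtain ⟨k, hk, rfl⟩ := hx; exact hmem k hk
    · rw [Finset.card_image_of_injOn hinj, Nat.card_Icc]; omega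
  have h1 : (T.filter (fun k => rk k ≤ d)).image rk = (T.image rk).filter (fun r => r ≤ d) := by
    rw [Finset.filter_image]
  have h2 : (T.filter (fun k => rk k ≤ d)).card = ((T.image rk).filter (fun r => r ≤ d)).card := by
    rw [← h1, Finset.card_image_of_injOn (hinj.mono (by intro x hx; exact (mem_filter.mp hx).1))]
  rw [h2, himg]
  have : (Icc 1 T.card).filter (fun r => r ≤ d) = Icc 1 (min d T.card) := by
    ext x; simp only [mem_filter, mem_Icc]; omega
  rw [this, Nat.card_Icc]; omega


lemma suffix_engine {A : Type*} [DecidableEq A] (n : ℕ) (S : ℕ → A) (b t : ℕ)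
    (lo hi i' : ℕ)
    (hblock : ∀ k, lo ≤ k → k ≤ hi → ((k - 1) / 2 ^ (b - 1)) * 2 ^ (b - 1) + 1 = lo)
    (hhin : hi = min (lo + 2 ^ (b - 1) - 1) n)
    (hloi : lo ≤ i')
    (a : A) (p : ℕ) (hp : p ∈ Finset.Icc i' hi) (hpa : S p = a) :
    ∃ F : Finset ℕ, F ⊆ Finset.Icc i' hi ∧ Set.InjOn S ↑F ∧
      (∀ k ∈ F, Iflag n S b t k) ∧ (a ∈ F.image S ∨ 2 ^ t ≤ F.card) := by
  haveI : DecidablePred (fun k => ∀ k' ∈ Icc (k + 1) hi, S k' ≠ S k) := fun k => by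
    infer_instance
  set R0 : Finset ℕ :=
    (Icc i' hi).filter (fun k => ∀ k' ∈ Icc (k + 1) hi, S k' ≠ S k) with hR0
  have hR0sub : R0 ⊆ Icc i' hi := filter_subset _ _
  have hR0mem : ∀ k ∈ R0, (i' ≤ k ∧ k ≤ hi) ∧ ∀ k' ∈ Icc (k + 1) hi, S k' ≠ S k := by
    intro k hk
    have h := mem_filter.mp hk
    exact ⟨mem_Icc.mp h.1, h.2⟩
  have hinjR : Set.InjOn S ↑R0 := by
    intro k1 h1 k2 h2 heq
    have h1' := hR0mem k1 h1
    have h2' := hR0mem k2 h2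
    by_contra hne
    rcases lt_or_gt_of_ne hne with h | h
    · exact h1'.2 k2 (mem_Icc.mpr ⟨by omega, h2'.1.2⟩) heq.symm
    · exact h2'.2 k1 (mem_Icc.mpr ⟨by omega, h1'.1.2⟩) heq
  -- rightmost occurrence
  have hrmax : ∀ (c : A) (m : ℕ), m ∈ Icc i' hi → S m = c →
      ∃ r ∈ R0, S r = c ∧ m ≤ r := by
    intro c m hm hmc
    have hmO : m ∈ (Icc i' hi).filter (fun x => S x = c) := mem_filter.mpr ⟨hm, hmc⟩
    have hne : ((Icc i' hi).filter (fun x => S x = c)).Nonempty := ⟨m, hmO⟩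
    set r := ((Icc i' hi).filter (fun x => S x = c)).max' hne with hr
    have hrO := Finset.max'_mem _ hne
    have hrO' := mem_filter.mp hrO
    have hrIcc := mem_Icc.mp hrO'.1
    refine ⟨r, ?_, hrO'.2, Finset.le_max' _ m hmO⟩
    refine mem_filter.mpr ⟨hrO'.1, ?_⟩
    intro k' hk' hek'
    have hk'2 := mem_Icc.mp hk'
    have hk'O : k' ∈ (Icc i' hi).filter (fun x => S x = c) :=
      mem_filter.mpr ⟨mem_Icc.mpr ⟨by omega, hk'2.2⟩, by rw [hek', hrO'.2]⟩
    have := Finset.le_max' _ k' hk'O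
    omega
  -- key : image over suffix equals image over high-rank R0 elements
  have hkey : ∀ k, i' ≤ k →
      (Icc k hi).image S = (R0.filter (fun k' => k ≤ k')).image S := by
    intro k hk
    ext c
    simp only [mem_image]
    constructor
    · rintro ⟨m, hm, rfl⟩
      rw [mem_Icc] at hm
      obtain ⟨r, hr, hrc, hmr⟩ := hrmax (S m) m (mem_Icc.mpr ⟨by omega, hm.2⟩) rfl
      exact ⟨r, mem_filter.mpr ⟨hr, by omega⟩, hrc⟩
    · rintro ⟨r, hr, rfl⟩
      have hr' := mem_filter.mp hr
      have := mem_Icc.mp (hR0sub hr'.1)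
      exact ⟨r, mem_Icc.mpr ⟨hr'.2, this.2⟩, rfl⟩
  have hcard : ∀ k, i' ≤ k →
      ((Icc k hi).image S).card = (R0.filter (fun k' => k ≤ k')).card := by
    intro k hk
    rw [hkey k hk]
    exact Finset.card_image_of_injOn (hinjR.mono (by
      intro x hx; exact (mem_filter.mp hx).1))
  set F : Finset ℕ := R0.filter (fun k => ((Icc k hi).image S).card ≤ 2 ^ t) with hF
  have hFsub : F ⊆ Icc i' hi := (filter_subset _ _).trans hR0sub
  have hFflag : ∀ k ∈ F, Iflag n S b t k := by
    intro k hk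
    have hk1 := mem_filter.mp hk
    have hk' := mem_Icc.mp (hFsub hk)
    have hbk := hblock k (le_trans hloi hk'.1) hk'.2
    have hcond := (hR0mem k hk1.1).2
    simp only [Iflag]
    rw [hbk, ← hhin]
    exact Or.inr ⟨hcond, hk1.2⟩
  refine ⟨F, hFsub, hinjR.mono (by intro x hx; exact (mem_filter.mp hx).1), hFflag, ?_⟩
  obtain ⟨r, hrR, hra, hpr⟩ := hrmax a p hp hpa
  by_cases hc : ((Icc r hi).image S).card ≤ 2 ^ t
  · exact Or.inl (mem_image.mpr ⟨r, mem_filter.mpr ⟨hrR, hc⟩, hra⟩)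
  · right
    have hir : i' ≤ r := (mem_Icc.mp (hR0sub hrR)).1
    rw [hcard r hir] at hc
    set T : Finset ℕ := R0.filter (fun k' => r ≤ k') with hT
    have hTcard : 2 ^ t + 1 ≤ T.card := by omega
    have hsub2 : T.filter (fun k => (T.filter (fun k' => k ≤ k')).card ≤ 2 ^ t) ⊆ F := by
      intro k hk
      have hk1 := mem_filter.mp hk
      have hkT := mem_filter.mp hk1.1
      refine mem_filter.mpr ⟨hkT.1, ?_⟩
      rw [hcard k (le_trans hir hkT.2)]
      have heqf : R0.filter (fun k' => k ≤ k') = T.filter (fun k' => k ≤ k') := by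
        ext x
        constructor
        · intro hx
          have hx' := mem_filter.mp hx
          exact mem_filter.mpr ⟨mem_filter.mpr ⟨hx'.1, le_trans hkT.2 hx'.2⟩, hx'.2⟩
        · intro hx
          have hx' := mem_filter.mp hx
          exact mem_filter.mpr ⟨(mem_filter.mp hx'.1).1, hx'.2⟩
      rw [heqf]
      exact hk1.2
    calc 2 ^ t = min (2 ^ t) T.card := by omega
    _ = (T.filter (fun k => (T.filter (fun k' => k ≤ k')).card ≤ 2 ^ t)).card :=
        (rank_filter_card_ge T (2 ^ t)).symm
    _ ≤ F.card := Finset.card_le_card hsub2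

lemma prefix_engine {A : Type*} [DecidableEq A] (n : ℕ) (S : ℕ → A) (b t : ℕ)
    (lo j' : ℕ) (hlo1 : 1 ≤ lo)
    (hblock : ∀ k, lo ≤ k → k ≤ j' → ((k - 1) / 2 ^ (b - 1)) * 2 ^ (b - 1) + 1 = lo)
    (a : A) (p : ℕ) (hp : p ∈ Finset.Icc lo j') (hpa : S p = a) :
    ∃ F : Finset ℕ, F ⊆ Finset.Icc lo j' ∧ Set.InjOn S ↑F ∧
      (∀ k ∈ F, Iflag n S b t k) ∧ (a ∈ F.image S ∨ 2 ^ t ≤ F.card) := by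
  haveI : DecidablePred (fun k => ∀ k' ∈ Icc lo (k - 1), S k' ≠ S k) := fun k => by
    infer_instance
  set R0 : Finset ℕ :=
    (Icc lo j').filter (fun k => ∀ k' ∈ Icc lo (k - 1), S k' ≠ S k) with hR0
  have hR0sub : R0 ⊆ Icc lo j' := filter_subset _ _
  have hR0mem : ∀ k ∈ R0, (lo ≤ k ∧ k ≤ j') ∧ ∀ k' ∈ Icc lo (k - 1), S k' ≠ S k := by
    intro k hk
    have h := mem_filter.mp hk
    exact ⟨mem_Icc.mp h.1, h.2⟩
  have hinjR : Set.InjOn S ↑R0 := by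
    intro k1 h1 k2 h2 heq
    have h1' := hR0mem k1 h1
    have h2' := hR0mem k2 h2
    by_contra hne
    rcases lt_or_gt_of_ne hne with h | h
    · exact h2'.2 k1 (mem_Icc.mpr ⟨h1'.1.1, by omega⟩) heq
    · exact h1'.2 k2 (mem_Icc.mpr ⟨h2'.1.1, by omega⟩) heq.symm
  -- leftmost occurrence
  have hrmin : ∀ (c : A) (m : ℕ), m ∈ Icc lo j' → S m = c →
      ∃ r ∈ R0, S r = c ∧ r ≤ m := by
    intro c m hm hmc
    have hmO : m ∈ (Icc lo j').filter (fun x => S x = c) := mem_filter.mpr ⟨hm, hmc⟩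
    have hne : ((Icc lo j').filter (fun x => S x = c)).Nonempty := ⟨m, hmO⟩
    have hrO := Finset.min'_mem _ hne
    have hrO' := mem_filter.mp hrO
    have hrIcc := mem_Icc.mp hrO'.1
    refine ⟨_, ?_, hrO'.2, Finset.min'_le _ m hmO⟩
    refine mem_filter.mpr ⟨hrO'.1, ?_⟩
    intro k' hk' hek'
    have hk'2 := mem_Icc.mp hk'
    have hk'O : k' ∈ (Icc lo j').filter (fun x => S x = c) :=
      mem_filter.mpr ⟨mem_Icc.mpr ⟨hk'2.1, by omega⟩, by rw [hek', hrO'.2]⟩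
    have := Finset.min'_le _ k' hk'O
    omega
  have hkey : ∀ k, k ≤ j' →
      (Icc lo k).image S = (R0.filter (fun k' => k' ≤ k)).image S := by
    intro k hk
    ext c
    simp only [mem_image]
    constructor
    · rintro ⟨m, hm, rfl⟩
      rw [mem_Icc] at hm
      obtain ⟨r, hr, hrc, hmr⟩ := hrmin (S m) m (mem_Icc.mpr ⟨hm.1, by omega⟩) rfl
      exact ⟨r, mem_filter.mpr ⟨hr, by omega⟩, hrc⟩
    · rintro ⟨r, hr, rfl⟩
      have hr' := mem_filter.mp hr
      have := mem_Icc.mp (hR0sub hr'.1)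
      exact ⟨r, mem_Icc.mpr ⟨this.1, hr'.2⟩, rfl⟩
  have hcard : ∀ k, k ≤ j' →
      ((Icc lo k).image S).card = (R0.filter (fun k' => k' ≤ k)).card := by
    intro k hk
    rw [hkey k hk]
    exact Finset.card_image_of_injOn (hinjR.mono (by
      intro x hx; exact (mem_filter.mp hx).1))
  set F : Finset ℕ := R0.filter (fun k => ((Icc lo k).image S).card ≤ 2 ^ t) with hF
  have hFsub : F ⊆ Icc lo j' := (filter_subset _ _).trans hR0sub
  have hFflag : ∀ k ∈ F, Iflag n S b t k := by
    intro k hk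
    have hk1 := mem_filter.mp hk
    have hk' := mem_Icc.mp (hFsub hk)
    have hbk := hblock k hk'.1 hk'.2
    have hcond := (hR0mem k hk1.1).2
    simp only [Iflag]
    rw [hbk]
    exact Or.inl ⟨hcond, hk1.2⟩
  refine ⟨F, hFsub, hinjR.mono (by intro x hx; exact (mem_filter.mp hx).1), hFflag, ?_⟩
  obtain ⟨r, hrR, hra, hpr⟩ := hrmin a p hp hpa
  by_cases hc : ((Icc lo r).image S).card ≤ 2 ^ t
  · exact Or.inl (mem_image.mpr ⟨r, mem_filter.mpr ⟨hrR, hc⟩, hra⟩)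
  · right
    have hir : r ≤ j' := (mem_Icc.mp (hR0sub hrR)).2
    rw [hcard r hir] at hc
    set T : Finset ℕ := R0.filter (fun k' => k' ≤ r) with hT
    have hTcard : 2 ^ t + 1 ≤ T.card := by omega
    have hsub2 : T.filter (fun k => (T.filter (fun k' => k' ≤ k)).card ≤ 2 ^ t) ⊆ F := by
      intro k hk
      have hk1 := mem_filter.mp hk
      have hkT := mem_filter.mp hk1.1
      refine mem_filter.mpr ⟨hkT.1, ?_⟩
      rw [hcard k (le_trans hkT.2 hir)]
      have heqf : R0.filter (fun k' => k' ≤ k) = T.filter (fun k' => k' ≤ k) := by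
        ext x
        constructor
        · intro hx
          have hx' := mem_filter.mp hx
          exact mem_filter.mpr ⟨mem_filter.mpr ⟨hx'.1, le_trans hx'.2 hkT.2⟩, hx'.2⟩
        · intro hx
          have hx' := mem_filter.mp hx
          exact mem_filter.mpr ⟨(mem_filter.mp hx'.1).1, hx'.2⟩
      rw [heqf]
      exact hk1.2
    calc 2 ^ t = min (2 ^ t) T.card := by omega
    _ = (T.filter (fun k => (T.filter (fun k' => k' ≤ k)).card ≤ 2 ^ t)).card :=
        (rank_filter_card_le T (2 ^ t)).symm
    _ ≤ F.card := Finset.card_le_card hsub2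

lemma final_count {A : Type*} [DecidableEq A] (S : ℕ → A) (τ : ℝ) (hτ0 : 0 < τ)
    (i j t : ℕ) (hij : i ≤ j) (ht : 1 / τ ≤ (2 : ℝ) ^ t)
    (F : Finset ℕ) (hFsub : F ⊆ Finset.Icc i j) (hFinj : Set.InjOn S ↑F)
    (a : A) (ha2 : (occCount S a i j : ℝ) ≤ τ * ((j - i + 1 : ℕ) : ℝ))
    (halt : a ∈ F.image S ∨ 2 ^ t ≤ F.card) :
    ∃ k ∈ F, (occCount S (S k) i j : ℝ) ≤ τ * ((j - i + 1 : ℕ) : ℝ) := by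
  by_contra hcon
  push_neg at hcon
  rcases halt with h | h
  · obtain ⟨k, hk, hka⟩ := mem_image.mp h
    exact absurd ha2 (by rw [← hka]; exact not_le.mpr (hcon k hk))
  · set V := F.image S with hV
    have hVcard : V.card = F.card := Finset.card_image_of_injOn hFinj
    have hVne : V.Nonempty := by
      rw [← Finset.card_pos, hVcard]
      have := Nat.one_le_two_pow (n := t)
      omega
    -- sum of occurrence counts is at most the interval length
    have hdisj : ∀ x ∈ V, ∀ y ∈ V, x ≠ y →
        Disjoint ((Finset.Icc i j).filter (fun k => S k = x))
          ((Finset.Icc i j).filter (fun k => S k = y)) := by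
      intro x _ y _ hxy
      rw [Finset.disjoint_filter]
      intro k _ hkx hky
      exact hxy (hkx ▸ hky ▸ rfl)
    have hsum_le : ∑ c ∈ V, occCount S c i j ≤ j - i + 1 := by
      have := (Finset.card_biUnion hdisj).symm
      unfold occCount
      rw [this]
      have hsub : V.biUnion (fun c => (Finset.Icc i j).filter (fun k => S k = c)) ⊆
          Finset.Icc i j := by
        intro x hx
        obtain ⟨c, _, hx2⟩ := Finset.mem_biUnion.mp hx
        exact (mem_filter.mp hx2).1
      calc (V.biUnion _).card ≤ (Finset.Icc i j).card := Finset.card_le_card hsub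
      _ = j - i + 1 := by rw [Nat.card_Icc]; omega
    have hLpos : (1 : ℝ) ≤ ((j - i + 1 : ℕ) : ℝ) := by
      have : 1 ≤ j - i + 1 := by omega
      exact_mod_cast this
    set L : ℝ := ((j - i + 1 : ℕ) : ℝ) with hL
    have hlow : ∀ c ∈ V, τ * L < (occCount S c i j : ℝ) := by
      intro c hc
      obtain ⟨k, hk, hka⟩ := mem_image.mp hc
      rw [← hka]
      exact hcon k hk
    have hstrict : (V.card : ℝ) * (τ * L) < ∑ c ∈ V, (occCount S c i j : ℝ) := by
      have := Finset.sum_lt_sum_of_nonempty hVne hlow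
      rwa [Finset.sum_const, nsmul_eq_mul] at this
    have hcast : (∑ c ∈ V, (occCount S c i j : ℝ)) ≤ L := by
      rw [← Nat.cast_sum, hL]
      exact_mod_cast hsum_le
    have hc2 : (2 : ℝ) ^ t ≤ (V.card : ℝ) := by
      rw [hVcard]
      calc (2:ℝ)^t = ((2^t : ℕ) : ℝ) := by push_cast; ring
      _ ≤ (F.card : ℝ) := by exact_mod_cast h
    have hτ2 : 1 ≤ τ * (2:ℝ)^t := by
      rw [div_le_iff₀ hτ0] at ht
      linarith [mul_comm τ ((2:ℝ)^t)]
    have hτL : 0 < τ * L := by positivity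
    nlinarith [mul_le_mul_of_nonneg_right hc2 (le_of_lt hτL)]

end AuxiliaryLemmas

open Finset in
/-- For `b = ⌊log₂(j-i+1)⌋ ≥ t = ⌈log₂(1/τ)⌉` (so `j-i+1 > 2^(b-1)` and
`⌈1/τ⌉ ≤ 2^t`), the positions flagged in `I_b^t[i..j]` contain a `τ`-minority of
`S[i..j]`, if one exists. -/
theorem Iflag_contains_minority {A : Type*} [DecidableEq A]
    (n : ℕ) (S : ℕ → A) (τ : ℝ) (hτ0 : 0 < τ) (hτ1 : τ ≤ 1)
    (i j : ℕ) (h1i : 1 ≤ i) (hij : i ≤ j) (hjn : j ≤ n)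
    (b t : ℕ) (htb : t ≤ b)
    (hlen : 2 ^ (b - 1) < j - i + 1)
    (ht : 1 / τ ≤ (2 : ℝ) ^ t)
    (hex : ∃ a, 1 ≤ occCount S a i j ∧
      (occCount S a i j : ℝ) ≤ τ * ((j - i + 1 : ℕ) : ℝ)) :
    ∃ k ∈ Finset.Icc i j, Iflag n S b t k ∧
      (occCount S (S k) i j : ℝ) ≤ τ * ((j - i + 1 : ℕ) : ℝ) := by
  obtain ⟨a, ha1, ha2⟩ := hex
  obtain ⟨p, hpmem, hpa⟩ : ∃ p ∈ Finset.Icc i j, S p = a := by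
    have hne : ((Finset.Icc i j).filter (fun k => S k = a)).Nonempty :=
      Finset.card_pos.mp (by unfold occCount at ha1; omega)
    obtain ⟨p, hp⟩ := hne
    exact ⟨p, (mem_filter.mp hp).1, (mem_filter.mp hp).2⟩
  rw [Finset.mem_Icc] at hpmem
  set e := 2 ^ (b - 1) with he'
  have he : 1 ≤ e := Nat.one_le_two_pow
  set q := (p - 1) / e with hq
  have h1 : e * q + (p - 1) % e = p - 1 := Nat.div_add_mod _ _
  have h2 : (p - 1) % e < e := Nat.mod_lt _ (by omega)
  have hp1 : 1 ≤ p := le_trans h1i hpmem.1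
  set lo := q * e + 1 with hlo
  have hmul : e * q = q * e := mul_comm e q
  have hlop : lo ≤ p := by omega
  have hplo : p ≤ lo + e - 1 := by omega
  set hi := min (lo + e - 1) n with hhi
  have hphi : p ≤ hi := by omega
  have hblock : ∀ k, lo ≤ k → k ≤ lo + e - 1 → ((k - 1) / e) * e + 1 = lo := by
    intro k hk1 hk2
    have hd : (k - 1) / e = q := by
      apply Nat.div_eq_of_lt_le
      · omega
      · rw [Nat.succ_mul]; omega
    rw [hd]
  have hjl : e ≤ j - i := by omega
  by_cases hcase : hi ≤ j
  · -- suffix case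
    have hsub : Finset.Icc (max i lo) hi ⊆ Finset.Icc i j := by
      intro x hx; rw [mem_Icc] at hx ⊢; omega
    obtain ⟨F, hFsub, hFinj, hFflag, hFalt⟩ :=
      suffix_engine n S b t lo hi (max i lo)
        (fun k hk1 hk2 => hblock k hk1 (by omega)) hhi (le_max_right _ _)
        a p (mem_Icc.mpr ⟨by omega, hphi⟩) hpa
    have hFij : F ⊆ Finset.Icc i j := hFsub.trans hsub
    obtain ⟨k, hkF, hkocc⟩ := final_count S τ hτ0 i j t hij ht F hFij hFinj a ha2 hFalt
    exact ⟨k, hFij hkF, hFflag k hkF, hkocc⟩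
  · -- prefix case
    have hsub : Finset.Icc lo j ⊆ Finset.Icc i j := by
      intro x hx; rw [mem_Icc] at hx ⊢; omega
    obtain ⟨F, hFsub, hFinj, hFflag, hFalt⟩ :=
      prefix_engine n S b t lo j (by omega)
        (fun k hk1 hk2 => hblock k hk1 (by omega))
        a p (mem_Icc.mpr ⟨hlop, hpmem.2⟩) hpa
    have hFij : F ⊆ Finset.Icc i j := hFsub.trans hsub
    obtain ⟨k, hkF, hkocc⟩ := final_count S τ hτ0 i j t hij ht F hFij hFinj a ha2 hFalt
    exact ⟨k, hFij hkF, hFflag k hkF, hkocc⟩
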